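/- arXiv:1212.5643 — 9 statements merged into one kernel-verified Lean document; each statement's English description precedes it below -/
import Mathlib

section
/- Let γ̂ : ℝ → ℂ be a function such that for every w ∈ ℝ the families (γ̂(w+2kπ))_{k∈ℤ} and (γ̂(w+4kπ))_{k∈ℤ} are summable, and D(w) := ∑_{k∈ℤ} γ̂(w+2kπ) is nonzero for every w. Let P : ℝ → ℂ be 4π-periodic with γ̂(w) = P(w) γ̂(w/2) for all w ∈ ℝ. Define Ŝ(w) = γ̂(w)/D(w). Then for every w: (i) the family (Ŝ(w+2kπ))_{k∈ℤ} is summable with ∑_{k∈ℤ} Ŝ(w+2kπ) = 1; (ii) the family (Ŝ(w+4kπ))_{k∈ℤ} is summable, and setting P_s(w) = ∑_{k∈ℤ} Ŝ(w+4kπ) one has P_s(w) = P(w)·D(w/2)/D(w); and (iii) Ŝ(w) = P_s(w)·Ŝ(w/2). -/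
/-- Proposition 1, equations (12)–(14): if the 2π- and 4π-periodizations of `γ̂`
are summable, `D w = ∑_k γ̂(w+2kπ)` never vanishes, `P` is 4π-periodic with
`γ̂(w) = P(w) γ̂(w/2)`, and `Ŝ(w) = γ̂(w)/D(w)`, then the 2π-periodization of `Ŝ` sums to `1`,
its 4π-periodization `P_s` is summable with `P_s(w) = P(w)·D(w/2)/D(w)`, and
`Ŝ(w) = P_s(w)·Ŝ(w/2)`. -/
theorem interpolation_two_scale_symbol (γhat : ℝ → ℂ)
    (h2 : ∀ w : ℝ, Summable (fun k : ℤ => γhat (w + 2 * (k : ℝ) * Real.pi)))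
    (h4 : ∀ w : ℝ, Summable (fun k : ℤ => γhat (w + 4 * (k : ℝ) * Real.pi)))
    (D : ℝ → ℂ) (hD : ∀ w : ℝ, D w = ∑' k : ℤ, γhat (w + 2 * (k : ℝ) * Real.pi))
    (hDne : ∀ w : ℝ, D w ≠ 0)
    (P : ℝ → ℂ) (hPper : ∀ w : ℝ, P (w + 4 * Real.pi) = P w)
    (hPscale : ∀ w : ℝ, γhat w = P w * γhat (w / 2))
    (S : ℝ → ℂ) (hS : ∀ w : ℝ, S w = γhat w / D w)
    (Ps : ℝ → ℂ) (hPs : ∀ w : ℝ, Ps w = ∑' k : ℤ, S (w + 4 * (k : ℝ) * Real.pi)) :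
    ∀ w : ℝ,
      HasSum (fun k : ℤ => S (w + 2 * (k : ℝ) * Real.pi)) 1 ∧
      Summable (fun k : ℤ => S (w + 4 * (k : ℝ) * Real.pi)) ∧
      Ps w = P w * D (w / 2) / D w ∧
      S w = Ps w * S (w / 2) := by
  -- D is 2π-integer-periodic
  have hDper : ∀ (w : ℝ) (n : ℤ), D (w + 2 * (n : ℝ) * Real.pi) = D w := by
    intro w n
    rw [hD, hD]
    rw [← (Equiv.addLeft n).tsum_eq (fun k : ℤ => γhat (w + 2 * (k : ℝ) * Real.pi))]
    congr 1
    funext k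
    have : w + 2 * (n : ℝ) * Real.pi + 2 * (k : ℝ) * Real.pi
        = w + 2 * ((Equiv.addLeft n k : ℤ) : ℝ) * Real.pi := by
      simp only [Equiv.coe_addLeft]
      push_cast
      ring
    rw [this]
  -- P is 4π-integer-periodic
  have hPperZ : ∀ (w : ℝ) (n : ℤ), P (w + 4 * (n : ℝ) * Real.pi) = P w := by
    intro w n
    have hper : Function.Periodic P (4 * Real.pi) := hPper
    have := hper.int_mul n w
    simpa [mul_comm, mul_assoc, mul_left_comm] using this
  intro w
  have hS2 : (fun k : ℤ => S (w + 2 * (k : ℝ) * Real.pi))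
      = fun k : ℤ => γhat (w + 2 * (k : ℝ) * Real.pi) / D w := by
    funext k; rw [hS, hDper]
  have hS4 : (fun k : ℤ => S (w + 4 * (k : ℝ) * Real.pi))
      = fun k : ℤ => γhat (w + 4 * (k : ℝ) * Real.pi) / D w := by
    funext k
    have h4to2 : w + 4 * (k : ℝ) * Real.pi = w + 2 * ((2 * k : ℤ) : ℝ) * Real.pi := by
      push_cast; ring
    rw [hS]
    congr 1
    rw [h4to2, hDper]
  have hγ4 : ∀ k : ℤ, γhat (w + 4 * (k : ℝ) * Real.pi)
      = P w * γhat (w / 2 + 2 * (k : ℝ) * Real.pi) := by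
    intro k
    rw [hPscale (w + 4 * (k : ℝ) * Real.pi), hPperZ]
    congr 1
    ring
  have hsum2 : HasSum (fun k : ℤ => S (w + 2 * (k : ℝ) * Real.pi)) 1 := by
    rw [hS2]
    have h := ((h2 w).hasSum).div_const (D w)
    have hone : (∑' b : ℤ, γhat (w + 2 * (b : ℝ) * Real.pi)) / D w = 1 := by
      rw [← hD w]; exact div_self (hDne w)
    rwa [hone] at h
  have hsum4 : Summable (fun k : ℤ => S (w + 4 * (k : ℝ) * Real.pi)) := by
    rw [hS4]
    exact (h4 w).div_const (D w)
  refine ⟨hsum2, hsum4, ?_, ?_⟩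
  · rw [hPs, hS4]
    rw [tsum_div_const]
    congr 1
    calc (∑' k : ℤ, γhat (w + 4 * (k : ℝ) * Real.pi))
        = ∑' k : ℤ, P w * γhat (w / 2 + 2 * (k : ℝ) * Real.pi) := by
          congr 1; funext k; exact hγ4 k
      _ = P w * ∑' k : ℤ, γhat (w / 2 + 2 * (k : ℝ) * Real.pi) := tsum_mul_left
      _ = P w * D (w / 2) := by rw [hD]
  · have hPsw : Ps w = P w * D (w / 2) / D w := by
      rw [hPs, hS4, tsum_div_const]
      congr 1
      calc (∑' k : ℤ, γhat (w + 4 * (k : ℝ) * Real.pi))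
          = ∑' k : ℤ, P w * γhat (w / 2 + 2 * (k : ℝ) * Real.pi) := by
            congr 1; funext k; exact hγ4 k
        _ = P w * ∑' k : ℤ, γhat (w / 2 + 2 * (k : ℝ) * Real.pi) := tsum_mul_left
        _ = P w * D (w / 2) := by rw [hD]
    rw [hPsw, hS, hS, hPscale w]
    field_simp
    rw [div_eq_div_iff (hDne w) (mul_ne_zero (hDne w) (hDne _))]
    ring
end

section
/- Let γ ∈ L¹(ℝ) ∩ L²(ℝ) with continuous Fourier transform γ̂(w) = ∫_ℝ γ(x) e^{-iwx} dx, and let (a_n)_{n∈ℤ} be complex numbers. Assume: (i) for every w ∈ ℝ the double family (a_n γ(k/2 − n) e^{-iwk/2})_{(k,n)∈ℤ×ℤ} is summable; (ii) for every w ∈ ℝ the family (a_n e^{-iwn})_{n∈ℤ} is summable, with sum A(w); (iii) for every w ∈ ℝ the families (γ(k/2) e^{-iwk/2})_{k∈ℤ} and (γ̂(w+4kπ))_{k∈ℤ} are summable and the Poisson summation identity (1/2) ∑_{k∈ℤ} γ(k/2) e^{-iwk/2} = ∑_{k∈ℤ} γ̂(w+4kπ) holds. Define S(k/2) = ∑_{n∈ℤ}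 a_n γ(k/2 − n) for k ∈ ℤ. Then for every w ∈ ℝ the family (S(k/2) e^{-iwk/2})_{k∈ℤ} is summable and (1/2) ∑_{k∈ℤ} S(k/2) e^{-iwk/2} = A(w) · ∑_{k∈ℤ} γ̂(w+4kπ). -/
/-- Appendix A, (A7)–(A12): transfer of the Poisson summation formula from a
generator `γ` to `S = ∑_n a_n γ(· − n)`: under the stated summability hypotheses,
`(1/2) ∑_k S(k/2) e^{-iwk/2} = A(w) · ∑_k γ̂(w+4kπ)` where `A(w) = ∑_n a_n e^{-iwn}`. -/
theorem poisson_transfer_to_interpolation_function (γ : ℝ → ℂ) (γhat : ℝ → ℂ)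
    (a : ℤ → ℂ) (A : ℝ → ℂ) (S : ℤ → ℂ)
    (hγ1 : MeasureTheory.Integrable γ)
    (hγ2 : MeasureTheory.MemLp γ 2)
    (hγhat : ∀ w : ℝ, γhat w = ∫ x : ℝ, γ x * Complex.exp (-Complex.I * (w : ℂ) * (x : ℂ)))
    (hcont : Continuous γhat)
    (h1 : ∀ w : ℝ, Summable (fun p : ℤ × ℤ =>
      a p.2 * γ ((p.1 : ℝ) / 2 - (p.2 : ℝ)) *
        Complex.exp (-Complex.I * (w : ℂ) * (p.1 : ℂ) / 2)))
    (h2 : ∀ w : ℝ, HasSum (fun n : ℤ => a n * Complex.exp (-Complex.I * (w : ℂ) * (n : ℂ))) (A w))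
    (h3 : ∀ w : ℝ,
      Summable (fun k : ℤ =>
        γ ((k : ℝ) / 2) * Complex.exp (-Complex.I * (w : ℂ) * (k : ℂ) / 2)) ∧
      Summable (fun k : ℤ => γhat (w + 4 * (k : ℝ) * Real.pi)) ∧
      (1 / 2 : ℂ) * ∑' k : ℤ, γ ((k : ℝ) / 2) * Complex.exp (-Complex.I * (w : ℂ) * (k : ℂ) / 2) =
        ∑' k : ℤ, γhat (w + 4 * (k : ℝ) * Real.pi))
    (hS : ∀ k : ℤ, S k = ∑' n : ℤ, a n * γ ((k : ℝ) / 2 - (n : ℝ))) :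
    ∀ w : ℝ,
      Summable (fun k : ℤ => S k * Complex.exp (-Complex.I * (w : ℂ) * (k : ℂ) / 2)) ∧
      (1 / 2 : ℂ) * ∑' k : ℤ, S k * Complex.exp (-Complex.I * (w : ℂ) * (k : ℂ) / 2) =
        A w * ∑' k : ℤ, γhat (w + 4 * (k : ℝ) * Real.pi) := by
  intro w
  obtain ⟨hs1, hs2, heq⟩ := h3 w
  set F : ℤ × ℤ → ℂ := fun p =>
    a p.2 * γ ((p.1 : ℝ) / 2 - (p.2 : ℝ)) *
      Complex.exp (-Complex.I * (w : ℂ) * (p.1 : ℂ) / 2) with hFdef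
  have hF : Summable F := h1 w
  have hfib : ∀ k : ℤ, HasSum (fun n => F (k, n))
      (S k * Complex.exp (-Complex.I * (w : ℂ) * (k : ℂ) / 2)) := by
    intro k
    have h := (hF.prod_factor k).hasSum
    have : (∑' n : ℤ, F (k, n))
        = S k * Complex.exp (-Complex.I * (w : ℂ) * (k : ℂ) / 2) := by
      rw [hS k, ← tsum_mul_right]
    rwa [this] at h
  have hT : HasSum (fun k : ℤ => S k * Complex.exp (-Complex.I * (w : ℂ) * (k : ℂ) / 2))
      (∑' p, F p) := HasSum.prod_fiberwise hF.hasSum hfib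
  refine ⟨hT.summable, ?_⟩
  -- reindex via shear equivalence
  let e : ℤ × ℤ ≃ ℤ × ℤ :=
    ⟨fun p => (p.1 + 2 * p.2, p.2), fun p => (p.1 - 2 * p.2, p.2),
      fun p => by simp, fun p => by simp⟩
  have he : ∀ p : ℤ × ℤ, F (e p) =
      (γ ((p.1 : ℝ) / 2) * Complex.exp (-Complex.I * (w : ℂ) * (p.1 : ℂ) / 2)) *
        (a p.2 * Complex.exp (-Complex.I * (w : ℂ) * (p.2 : ℂ))) := by
    intro p
    have harg : ((((p.1 + 2 * p.2 : ℤ)) : ℝ) / 2 - (p.2 : ℝ)) = (p.1 : ℝ) / 2 := by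
      push_cast; ring
    have hexp : (-Complex.I * (w : ℂ) * (((p.1 + 2 * p.2 : ℤ)) : ℂ) / 2)
        = -Complex.I * (w : ℂ) * (p.1 : ℂ) / 2 + -Complex.I * (w : ℂ) * (p.2 : ℂ) := by
      push_cast; ring
    simp only [e, Equiv.coe_fn_mk, hFdef]
    rw [harg, hexp, Complex.exp_add]
    ring
  have hcomp : HasSum (F ∘ e) (∑' p, F p) := (e.hasSum_iff).2 hF.hasSum
  have hmul : HasSum (fun p : ℤ × ℤ =>
      (γ ((p.1 : ℝ) / 2) * Complex.exp (-Complex.I * (w : ℂ) * (p.1 : ℂ) / 2)) *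
        (a p.2 * Complex.exp (-Complex.I * (w : ℂ) * (p.2 : ℂ)))) (∑' p, F p) := by
    rw [← funext he]; exact hcomp
  have key : (∑' k : ℤ, γ ((k : ℝ) / 2) * Complex.exp (-Complex.I * (w : ℂ) * (k : ℂ) / 2))
      * A w = ∑' p, F p := HasSum.mul_eq hs1.hasSum (h2 w) hmul
  rw [hT.tsum_eq, ← key, ← heq]
  ring
end

section
/- Let P, Q, E : ℝ → ℂ be functions satisfying, for every w ∈ ℝ: P(w) + P(w+2π) = 1; e^{iw/2}(Q(w) − Q(w+2π)) = 1; and Q(w) E(w) conj(P(w)) + Q(w+2π) E(w+2π) conj(P(w+2π)) = 0. Define Δ(w) = P(w) Q(w+2π) − P(w+2π) Q(w). Then for every w ∈ ℝ: Δ(w) · ( E(w+2π) conj(P(w+2π)) + E(w) conj(P(w)) ) = −e^{-iw/2} · ( E(w+2π) |P(w+2π)|² + E(w) |P(w)|² ). -/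
/-- equations (F13)/(F15): if `P(w)+P(w+2π)=1`, `e^{iw/2}(Q(w)−Q(w+2π))=1` and
`Q(w)E(w)conj(P(w)) + Q(w+2π)E(w+2π)conj(P(w+2π)) = 0` for every `w`, then with
`Δ(w) = P(w)Q(w+2π) − P(w+2π)Q(w)` one has
`Δ(w)·(E(w+2π)conj(P(w+2π)) + E(w)conj(P(w))) = −e^{-iw/2}·(E(w+2π)|P(w+2π)|² + E(w)|P(w)|²)`. -/
theorem determinant_identity (P Q E : ℝ → ℂ)
    (hP : ∀ w : ℝ, P w + P (w + 2 * Real.pi) = 1)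
    (hQ : ∀ w : ℝ,
      Complex.exp (Complex.I * (w : ℂ) / 2) * (Q w - Q (w + 2 * Real.pi)) = 1)
    (horth : ∀ w : ℝ,
      Q w * E w * (starRingEnd ℂ) (P w) +
        Q (w + 2 * Real.pi) * E (w + 2 * Real.pi) *
          (starRingEnd ℂ) (P (w + 2 * Real.pi)) = 0)
    (Δ : ℝ → ℂ)
    (hΔ : ∀ w : ℝ, Δ w = P w * Q (w + 2 * Real.pi) - P (w + 2 * Real.pi) * Q w) :
    ∀ w : ℝ,
      Δ w * (E (w + 2 * Real.pi) * (starRingEnd ℂ) (P (w + 2 * Real.pi)) +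
          E w * (starRingEnd ℂ) (P w)) =
        -Complex.exp (-Complex.I * (w : ℂ) / 2) *
          (E (w + 2 * Real.pi) * (‖P (w + 2 * Real.pi)‖ ^ 2 : ℝ) +
            E w * (‖P w‖ ^ 2 : ℝ)) := by
  intro w
  have hq' : Q w - Q (w + 2 * Real.pi) = Complex.exp (-Complex.I * (w : ℂ) / 2) := by
    have h := hQ w
    have hz : Complex.exp (Complex.I * (w : ℂ) / 2) *
        Complex.exp (-Complex.I * (w : ℂ) / 2) = 1 := by
      rw [← Complex.exp_add]
      ring_nf
      exact Complex.exp_zero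
    calc Q w - Q (w + 2 * Real.pi)
        = Complex.exp (-Complex.I * (w : ℂ) / 2) *
            (Complex.exp (Complex.I * (w : ℂ) / 2) * (Q w - Q (w + 2 * Real.pi))) := by
          rw [← mul_assoc, mul_comm (Complex.exp (-Complex.I * (w : ℂ) / 2)), hz, one_mul]
      _ = Complex.exp (-Complex.I * (w : ℂ) / 2) := by rw [h, mul_one]
  have hn1 : ((‖P w‖ ^ 2 : ℝ) : ℂ) = P w * (starRingEnd ℂ) (P w) := by
    rw [Complex.mul_conj']; push_cast; ring
  have hn2 : ((‖P (w + 2 * Real.pi)‖ ^ 2 : ℝ) : ℂ) =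
      P (w + 2 * Real.pi) * (starRingEnd ℂ) (P (w + 2 * Real.pi)) := by
    rw [Complex.mul_conj']; push_cast; ring
  rw [hΔ w, hn1, hn2]
  linear_combination (P w - P (w + 2 * Real.pi)) * horth w -
    (E (w + 2 * Real.pi) * P (w + 2 * Real.pi) * (starRingEnd ℂ) (P (w + 2 * Real.pi)) +
      E w * P w * (starRingEnd ℂ) (P w)) * hq'
end

section
/- Let P, Q, E : ℝ → ℂ be functions satisfying, for every w ∈ ℝ: P(w) + P(w+2π) = 1; e^{iw/2}(Q(w) − Q(w+2π)) = 1; Q(w) E(w) conj(P(w)) + Q(w+2π) E(w+2π) conj(P(w+2π)) = 0. Define Δ(w) = P(w) Q(w+2π) − P(w+2π) Q(w). Suppose there exist constants 0 < A_Δ ≤ B_Δ < ∞ and 0 < A_E ≤ B_E < ∞ such that for every w: A_Δ ≤ |Δ(w)|² ≤ B_Δ and A_E ≤ |E(w+2π)|P(w+2π)|² + E(w)|P(w)|²| ≤ B_E. Then for every w ∈ ℝ: A_E²/B_Δ ≤ |E(w+2π) conj(P(w+2π)) + E(w) conj(P(w))|² ≤ B_E²/A_Δ. -/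
/-- bound (F18), i.e. equation (23): under the reconstruction-filter identities
and the two-sided bounds `A_Δ ≤ |Δ(w)|² ≤ B_Δ` and
`A_E ≤ |E(w+2π)|P(w+2π)|² + E(w)|P(w)|²| ≤ B_E`, one has
`A_E²/B_Δ ≤ |E(w+2π)conj(P(w+2π)) + E(w)conj(P(w))|² ≤ B_E²/A_Δ` for every `w`. -/
theorem PE_two_sided_bound (P Q E : ℝ → ℂ)
    (hP : ∀ w : ℝ, P w + P (w + 2 * Real.pi) = 1)
    (hQ : ∀ w : ℝ,
      Complex.exp (Complex.I * (w : ℂ) / 2) * (Q w - Q (w + 2 * Real.pi)) = 1)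
    (horth : ∀ w : ℝ,
      Q w * E w * (starRingEnd ℂ) (P w) +
        Q (w + 2 * Real.pi) * E (w + 2 * Real.pi) *
          (starRingEnd ℂ) (P (w + 2 * Real.pi)) = 0)
    (Δ : ℝ → ℂ)
    (hΔ : ∀ w : ℝ, Δ w = P w * Q (w + 2 * Real.pi) - P (w + 2 * Real.pi) * Q w)
    (AΔ BΔ AE BE : ℝ)
    (hAΔ : 0 < AΔ) (hΔB : AΔ ≤ BΔ)
    (hAE : 0 < AE) (hEB : AE ≤ BE)
    (hΔbound : ∀ w : ℝ, AΔ ≤ ‖Δ w‖ ^ 2 ∧ ‖Δ w‖ ^ 2 ≤ BΔ)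
    (hEbound : ∀ w : ℝ,
      AE ≤ ‖E (w + 2 * Real.pi) * (‖P (w + 2 * Real.pi)‖ ^ 2 : ℝ) +
            E w * (‖P w‖ ^ 2 : ℝ)‖ ∧
      ‖E (w + 2 * Real.pi) * (‖P (w + 2 * Real.pi)‖ ^ 2 : ℝ) +
            E w * (‖P w‖ ^ 2 : ℝ)‖ ≤ BE) :
    ∀ w : ℝ,
      AE ^ 2 / BΔ ≤
        ‖E (w + 2 * Real.pi) * (starRingEnd ℂ) (P (w + 2 * Real.pi)) +
          E w * (starRingEnd ℂ) (P w)‖ ^ 2 ∧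
      ‖E (w + 2 * Real.pi) * (starRingEnd ℂ) (P (w + 2 * Real.pi)) +
          E w * (starRingEnd ℂ) (P w)‖ ^ 2 ≤ BE ^ 2 / AΔ := by
  intro w
  set w' := w + 2 * Real.pi with hw'
  set S := E w' * (starRingEnd ℂ) (P w') + E w * (starRingEnd ℂ) (P w) with hS
  set T := E w' * ((‖P w'‖ ^ 2 : ℝ) : ℂ) + E w * ((‖P w‖ ^ 2 : ℝ) : ℂ) with hT
  -- key algebraic identity
  have e1 : ((‖P w‖ ^ 2 : ℝ) : ℂ) = P w * (starRingEnd ℂ) (P w) := by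
    rw [Complex.mul_conj']; norm_cast
  have e2 : ((‖P w'‖ ^ 2 : ℝ) : ℂ) = P w' * (starRingEnd ℂ) (P w') := by
    rw [Complex.mul_conj']; norm_cast
  have key : S * Δ w = (Q w' - Q w) * T := by
    rw [hS, hT, hΔ w, e1, e2]
    linear_combination (P w - P w') * horth w
  -- |Q w' - Q w| = 1
  have hQ1 : ‖Q w' - Q w‖ = 1 := by
    have := congrArg norm (hQ w)
    rw [norm_mul, Complex.norm_exp] at this
    have hre : (Complex.I * (w : ℂ) / 2).re = 0 := by simp
    rw [hre, Real.exp_zero, one_mul, norm_one] at this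
    rw [← norm_neg]; simpa [neg_sub] using this
  have hnorm : ‖S‖ * ‖Δ w‖ = ‖T‖ := by
    have := congrArg norm key
    rwa [norm_mul, norm_mul, hQ1, one_mul] at this
  obtain ⟨hΔlo, hΔhi⟩ := hΔbound w
  obtain ⟨hTlo, hThi⟩ := hEbound w
  rw [← hw', ← hT] at hTlo hThi
  have hΔpos : 0 < ‖Δ w‖ ^ 2 := lt_of_lt_of_le hAΔ hΔlo
  have hS2 : ‖S‖ ^ 2 = ‖T‖ ^ 2 / ‖Δ w‖ ^ 2 := by
    rw [eq_div_iff (ne_of_gt hΔpos)]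
    nlinarith [hnorm]
  rw [hS2]
  constructor
  · apply div_le_div₀ (by nlinarith [norm_nonneg T]) _ hΔpos hΔhi
    nlinarith [norm_nonneg T]
  · apply div_le_div₀ (by nlinarith) _ hAΔ hΔlo
    nlinarith [norm_nonneg T, norm_nonneg S]
end

section
/- Let P, Q, E : ℝ → ℂ be functions satisfying, for every w ∈ ℝ: e^{iw/2}(Q(w) − Q(w+2π)) = 1 and Q(w) E(w) conj(P(w)) + Q(w+2π) E(w+2π) conj(P(w+2π)) = 0. If for a given w the quantity D(w) := E(w+2π) conj(P(w+2π)) + E(w) conj(P(w)) is nonzero, then Q(w) = e^{-iw/2} · E(w+2π) · conj(P(w+2π)) / D(w). -/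
/-- formula (44) of Theorem 2: if `e^{iw/2}(Q(w) − Q(w+2π)) = 1` and
`Q(w)E(w)conj(P(w)) + Q(w+2π)E(w+2π)conj(P(w+2π)) = 0` for every `w`, then whenever
`D(w) = E(w+2π)conj(P(w+2π)) + E(w)conj(P(w)) ≠ 0` one has
`Q(w) = e^{-iw/2}·E(w+2π)·conj(P(w+2π))/D(w)`. -/
theorem wavelet_symbol_formula (P Q E : ℝ → ℂ)
    (hQ : ∀ w : ℝ,
      Complex.exp (Complex.I * (w : ℂ) / 2) * (Q w - Q (w + 2 * Real.pi)) = 1)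
    (horth : ∀ w : ℝ,
      Q w * E w * (starRingEnd ℂ) (P w) +
        Q (w + 2 * Real.pi) * E (w + 2 * Real.pi) *
          (starRingEnd ℂ) (P (w + 2 * Real.pi)) = 0) :
    ∀ w : ℝ,
      E (w + 2 * Real.pi) * (starRingEnd ℂ) (P (w + 2 * Real.pi)) +
          E w * (starRingEnd ℂ) (P w) ≠ 0 →
      Q w = Complex.exp (-Complex.I * (w : ℂ) / 2) * E (w + 2 * Real.pi) *
          (starRingEnd ℂ) (P (w + 2 * Real.pi)) /
          (E (w + 2 * Real.pi) * (starRingEnd ℂ) (P (w + 2 * Real.pi)) +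
            E w * (starRingEnd ℂ) (P w)) := by
  intro w hD
  have h1 := hQ w
  have h2 := horth w
  have he : Complex.exp (Complex.I * (w : ℂ) / 2) *
      Complex.exp (-Complex.I * (w : ℂ) / 2) = 1 := by
    rw [← Complex.exp_add]; ring_nf; exact Complex.exp_zero
  rw [eq_div_iff hD]
  linear_combination h2 +
    (E (w + 2 * Real.pi) * (starRingEnd ℂ) (P (w + 2 * Real.pi)) *
      Complex.exp (-Complex.I * (w : ℂ) / 2)) * h1 -
    (E (w + 2 * Real.pi) * (starRingEnd ℂ) (P (w + 2 * Real.pi)) *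
      (Q w - Q (w + 2 * Real.pi))) * he
end

section
/- For every real x with x ∉ πℤ, the family ( sin⁴(x) / (x + kπ)⁴ )_{k∈ℤ} is summable and ∑_{k∈ℤ} sin⁴(x)/(x+kπ)⁴ = (2 + cos(2x))/3 = (2cos²(x) + 1)/3. -/
open Complex MeasureTheory Real Set

/-- The auxiliary function whose Fourier coefficients are `(β-1)²/c²`. -/
noncomputable def gg (x : ℝ) : ℝ → ℂ :=
  fun t => (((1:ℂ) - Complex.exp (2*x*I)) * t + Complex.exp (2*x*I)) * Complex.exp (2*x*I*t)

lemma gg_continuous (x : ℝ) : Continuous (gg x) := by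
  unfold gg; fun_prop

lemma integral_linear_mul_exp (a b c : ℂ) (hc : c ≠ 0) :
    ∫ t in (0:ℝ)..1, (a * t + b) * Complex.exp (c * t)
      = (a/c + (b*c-a)/c^2) * Complex.exp c - (b*c-a)/c^2 := by
  have key : ∀ t ∈ Set.uIcc (0:ℝ) 1, HasDerivAt
      (fun s : ℝ => (a/c * s + (b*c-a)/c^2) * Complex.exp (c * s))
      ((a * t + b) * Complex.exp (c * t)) t := by
    intro t _
    have h1 : HasDerivAt (fun z : ℂ => (a/c * z + (b*c-a)/c^2) * Complex.exp (c * z))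
        (a/c * Complex.exp (c * t) + (a/c * t + (b*c-a)/c^2) * (Complex.exp (c * t) * c))
        (t : ℂ) := by
      have hl : HasDerivAt (fun z : ℂ => a/c * z + (b*c-a)/c^2) (a/c) (t : ℂ) := by
        simpa using ((hasDerivAt_id (t:ℂ)).const_mul (a/c)).add_const ((b*c-a)/c^2)
      have he : HasDerivAt (fun z : ℂ => Complex.exp (c * z)) (Complex.exp (c * t) * c) (t:ℂ) := by
        exact (((hasDerivAt_id' (t:ℂ)).const_mul c).cexp).congr_deriv (by ring)
      exact hl.mul he
    have := h1.comp_ofReal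
    convert this using 1
    field_simp
    ring
  have cont : IntervalIntegrable
      (fun t : ℝ => (a * t + b) * Complex.exp (c * t)) MeasureTheory.volume 0 1 := by
    apply Continuous.intervalIntegrable
    continuity
  have := intervalIntegral.integral_eq_sub_of_hasDerivAt key cont
  simpa using this

lemma fourier_integral_gg (x : ℝ) (n : ℤ) (h : x ≠ π * n) :
    ∫ t in (0:ℝ)..1, Complex.exp (2*π*I*(-n)*t) * gg x t
      = (Complex.exp (2*x*I) - 1)^2 / (((2*x - 2*π*n) : ℝ) * I)^2 := by
  set β := Complex.exp (2*x*I) with hβ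
  set c : ℂ := ((2*x - 2*π*n : ℝ) : ℂ) * I with hc
  have hc0 : c ≠ 0 := by
    simp only [hc, mul_ne_zero_iff, I_ne_zero, and_true, Ne, ofReal_eq_zero]
    constructor
    · intro hcc; apply h; linarith
    · simp
  have hec : Complex.exp c = β := by
    rw [hβ, hc]
    rw [show ((2*x - 2*π*n : ℝ) : ℂ) * I = 2*x*I + ((-n : ℤ) : ℂ) * (2*π*I) by push_cast; ring]
    rw [Complex.exp_add, Complex.exp_int_mul_two_pi_mul_I, mul_one]
  have heq : ∀ t : ℝ, Complex.exp (2*π*I*(-n)*t) * gg x t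
      = ((1 - β) * t + β) * Complex.exp (c * t) := by
    intro t
    rw [gg, ← hβ]
    rw [mul_comm, mul_assoc, ← Complex.exp_add]
    congr 2
    push_cast [hc]
    ring
  rw [intervalIntegral.integral_congr (fun t _ => heq t)]
  rw [integral_linear_mul_exp _ _ _ hc0, hec]
  field_simp
  ring

lemma gg_norm_sq (x : ℝ) (t : ℝ) :
    ‖gg x t‖^2 = (t + (1-t)*Real.cos (2*x))^2 + ((1-t)*Real.sin (2*x))^2 := by
  have hβ : Complex.exp (2*x*I) = (Real.cos (2*x) : ℝ) + (Real.sin (2*x) : ℝ) * I := by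
    rw [show (2*(x:ℂ)*I) = ((2*x : ℝ) : ℂ) * I by push_cast; ring, Complex.exp_mul_I]
    simp [Complex.ofReal_cos, Complex.ofReal_sin]
  have h1 : ((1:ℂ) - Complex.exp (2*x*I)) * t + Complex.exp (2*x*I)
      = ((t + (1-t)*Real.cos (2*x) : ℝ) : ℂ) + ((( 1-t)*Real.sin (2*x) : ℝ) : ℂ) * I := by
    rw [hβ]; push_cast; ring
  have h2 : ‖Complex.exp (2*x*I*t)‖ = 1 := by
    rw [Complex.norm_exp]
    simp
  rw [gg, norm_mul, h2, mul_one, h1, Complex.sq_norm,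
    Complex.normSq_add_mul_I]

lemma gg_norm_le (x : ℝ) (t : ℝ) (ht : t ∈ Set.Ioc (0:ℝ) 1) : ‖gg x t‖ ≤ 3 := by
  have h := gg_norm_sq x t
  have h1 : |Real.cos (2*x)| ≤ 1 := Real.abs_cos_le_one _
  have h2 : |Real.sin (2*x)| ≤ 1 := Real.abs_sin_le_one _
  obtain ⟨ht0, ht1⟩ := ht
  obtain ⟨hc1, hc2⟩ := abs_le.mp h1
  obtain ⟨hs1, hs2⟩ := abs_le.mp h2
  have p1 : (0:ℝ) ≤ (1-t) * (1 - Real.cos (2*x)) :=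
    mul_nonneg (by linarith) (by linarith)
  have p2 : (0:ℝ) ≤ (1-t) * (1 + Real.cos (2*x)) :=
    mul_nonneg (by linarith) (by linarith)
  have hu1 : t + (1-t)*Real.cos (2*x) ≤ 1 := by nlinarith
  have hu2 : -1 ≤ t + (1-t)*Real.cos (2*x) := by nlinarith
  have a1 : (1-t)^2 ≤ 1 := by nlinarith
  have a2 : Real.sin (2*x)^2 ≤ 1 := by nlinarith
  have hv : ((1-t)*Real.sin (2*x))^2 ≤ 1 := by
    rw [mul_pow]
    calc (1-t)^2 * Real.sin (2*x)^2 ≤ 1 * 1 :=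
          mul_le_mul a1 a2 (sq_nonneg _) zero_le_one
    _ = 1 := by ring
  have h9 : ‖gg x t‖^2 ≤ 9 := by nlinarith
  nlinarith [norm_nonneg (gg x t)]

lemma coeff_norm_sq (x : ℝ) (n : ℤ) (h : x - π * n ≠ 0) :
    ‖(Complex.exp (2*x*I) - 1)^2 / (((2*x - 2*π*n : ℝ) : ℂ) * I)^2‖^2
      = Real.sin x^4 / (x - π*n)^4 := by
  have hβ : Complex.exp (2*x*I) - 1
      = ((Real.cos (2*x) - 1 : ℝ) : ℂ) + ((Real.sin (2*x) : ℝ) : ℂ) * I := by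
    rw [show (2*(x:ℂ)*I) = ((2*x : ℝ) : ℂ) * I by push_cast; ring, Complex.exp_mul_I]
    push_cast [Complex.ofReal_cos, Complex.ofReal_sin]
    ring
  have h1 : ‖Complex.exp (2*x*I) - 1‖^2 = 4 * Real.sin x^2 := by
    rw [hβ, Complex.sq_norm, Complex.normSq_add_mul_I]
    have hc := Real.cos_two_mul x
    have hs := Real.sin_sq_add_cos_sq (2*x)
    have hs' := Real.sin_sq_add_cos_sq x
    nlinarith
  have h2 : ‖(((2*x - 2*π*n : ℝ) : ℂ) * I)‖^2 = 4 * (x - π*n)^2 := by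
    rw [norm_mul, Complex.norm_I, mul_one, Complex.norm_real, Real.norm_eq_abs, _root_.sq_abs]
    ring
  rw [norm_div, norm_pow, norm_pow, div_pow, ← pow_mul, ← pow_mul, pow_mul, pow_mul, h1, h2]
  rw [div_eq_div_iff]
  · ring
  · positivity
  · positivity

lemma integral_gg_norm_sq (x : ℝ) :
    ∫ t in (0:ℝ)..1, ‖gg x t‖^2 = (2 + Real.cos (2*x))/3 := by
  set c := Real.cos (2*x) with hcdef
  have hpt : ∀ t : ℝ, ‖gg x t‖^2 = 1 + (2*c-2)*t + (2-2*c)*t^2 := by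
    intro t
    rw [gg_norm_sq x t]
    have hs := Real.sin_sq_add_cos_sq (2*x)
    linear_combination (1-t)^2 * hs
  rw [intervalIntegral.integral_congr (fun t _ => hpt t)]
  have i1 : IntervalIntegrable (fun t : ℝ => 1 + (2*c-2)*t) MeasureTheory.volume 0 1 := by
    apply Continuous.intervalIntegrable; continuity
  have i2 : IntervalIntegrable (fun t : ℝ => (2-2*c)*t^2) MeasureTheory.volume 0 1 := by
    apply Continuous.intervalIntegrable; continuity
  have i3 : IntervalIntegrable (fun t : ℝ => (1:ℝ)) MeasureTheory.volume 0 1 := by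
    apply Continuous.intervalIntegrable; continuity
  have i4 : IntervalIntegrable (fun t : ℝ => (2*c-2)*t) MeasureTheory.volume 0 1 := by
    apply Continuous.intervalIntegrable; continuity
  rw [show (fun t : ℝ => 1 + (2*c-2)*t + (2-2*c)*t^2)
      = (fun t : ℝ => (1 + (2*c-2)*t) + (2-2*c)*t^2) from rfl]
  rw [intervalIntegral.integral_add i1 i2, intervalIntegral.integral_add i3 i4,
    intervalIntegral.integral_const_mul, intervalIntegral.integral_const_mul,
    intervalIntegral.integral_const]
  simp
  ring

/-- equation (69)/(60): for `x ∉ πℤ`,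
`∑_{k∈ℤ} sin⁴(x)/(x+kπ)⁴ = (2 + cos(2x))/3 = (2cos²(x)+1)/3`. -/
theorem sum_sin_pow_four_div_shifted (x : ℝ) (hx : ∀ k : ℤ, x ≠ (k : ℝ) * Real.pi) :
    HasSum (fun k : ℤ => Real.sin x ^ 4 / (x + (k : ℝ) * Real.pi) ^ 4)
      ((2 + Real.cos (2 * x)) / 3) ∧
    (2 + Real.cos (2 * x)) / 3 = (2 * Real.cos x ^ 2 + 1) / 3 := by
  refine ⟨?_, by rw [Real.cos_two_mul]; ring⟩
  haveI : Fact (0 < (1:ℝ)) := ⟨one_pos⟩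
  set G : AddCircle (1:ℝ) → ℂ := AddCircle.liftIoc 1 0 (gg x) with hG
  have hGmeas : Measurable G := by
    have hGe : G = (fun y : Set.Ioc (0:ℝ) (0+1) => gg x (y:ℝ)) ∘
        (AddCircle.measurableEquivIoc 1 0) := rfl
    rw [hGe]
    exact (((gg_continuous x).measurable).comp measurable_subtype_coe).comp
      (AddCircle.measurableEquivIoc 1 0).measurable
  have hGbdd : ∀ z, ‖G z‖ ≤ 3 := by
    intro z
    have hz : G z = gg x ((AddCircle.equivIoc 1 0 z : ℝ)) := rfl
    rw [hz]
    apply gg_norm_le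
    have h := (AddCircle.equivIoc 1 0 z).2
    simpa using h
  have hmem : MemLp G 2 (AddCircle.haarAddCircle) :=
    MemLp.of_bound hGmeas.aestronglyMeasurable 3 (Filter.Eventually.of_forall hGbdd)
  set f : Lp ℂ 2 (AddCircle.haarAddCircle) := hmem.toLp G with hf
  have hcoe : ⇑f =ᵐ[AddCircle.haarAddCircle] G := hmem.coeFn_toLp
  -- Fourier coefficients of `f`
  have hcoeff : ∀ n : ℤ, fourierCoeff (⇑f) n
      = (Complex.exp (2*x*I) - 1)^2 / (((2*x - 2*π*n : ℝ) : ℂ) * I)^2 := by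
    intro n
    have e1 : fourierCoeff (⇑f) n = fourierCoeff G n := by
      simp_rw [fourierCoeff]
      apply integral_congr_ae
      filter_upwards [hcoe] with t ht
      rw [ht]
    rw [e1, hG, fourierCoeff_liftIoc_eq, fourierCoeffOn_eq_integral]
    simp only [zero_add, sub_zero, one_div_one, one_smul, div_one]
    rw [← fourier_integral_gg x n (fun h => hx n (by rw [h]; ring))]
    apply intervalIntegral.integral_congr
    intro t _
    simp only [fourier_coe_apply, smul_eq_mul]
    congr 2
    push_cast [div_one]
    ring
  -- Summability from the ℓ² structure
  have hsum : Summable (fun n : ℤ => ‖fourierCoeff (⇑f) n‖^2) := by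
    have h2 := (lp.memℓp (fourierBasis.repr f)).summable
      (by norm_num : 0 < (2:ENNReal).toReal)
    refine h2.congr fun n => ?_
    rw [fourierBasis_repr]
    have h22 : ((2:ENNReal)).toReal = ((2:ℕ):ℝ) := by norm_num
    rw [h22, Real.rpow_natCast]
  -- Parseval
  have hHasSum : HasSum (fun n : ℤ => ‖fourierCoeff (⇑f) n‖^2)
      (∫ t : AddCircle 1, ‖(⇑f) t‖^2 ∂AddCircle.haarAddCircle) := by
    have := tsum_sq_fourierCoeff f
    rw [← this]
    exact hsum.hasSum
  -- Compute the right-hand side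
  have hInt : (∫ t : AddCircle 1, ‖(⇑f) t‖^2 ∂AddCircle.haarAddCircle)
      = (2 + Real.cos (2*x))/3 := by
    have e1 : (∫ t : AddCircle 1, ‖(⇑f) t‖^2 ∂AddCircle.haarAddCircle)
        = ∫ t : AddCircle 1, ‖G t‖^2 ∂AddCircle.haarAddCircle := by
      apply integral_congr_ae
      filter_upwards [hcoe] with t ht
      rw [ht]
    have e2 : (volume : Measure (AddCircle (1:ℝ))) = AddCircle.haarAddCircle := by
      rw [AddCircle.volume_eq_smul_haarAddCircle]
      simp
    have e3 : Set.EqOn (fun a : ℝ => ‖G ((a : ℝ) : AddCircle (1:ℝ))‖^2)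
        (fun a : ℝ => ‖gg x a‖^2) (Set.Ioc (0:ℝ) (0+1)) := by
      intro a ha
      simp only [hG]
      rw [AddCircle.liftIoc_coe_apply ha]
    have e4 := AddCircle.integral_preimage (1:ℝ) 0 (fun z : AddCircle 1 => ‖G z‖^2)
    rw [e1, ← e2, ← e4]
    rw [setIntegral_congr_fun measurableSet_Ioc e3,
      ← intervalIntegral.integral_of_le (by norm_num : (0:ℝ) ≤ 0+1)]
    simpa using integral_gg_norm_sq x
  rw [hInt] at hHasSum
  -- Identify the summands and reindex by `n ↦ -n`
  have hterm : ∀ n : ℤ, ‖fourierCoeff (⇑f) n‖^2 = Real.sin x^4 / (x - π*n)^4 := by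
    intro n
    rw [hcoeff n]
    apply coeff_norm_sq
    intro h
    exact hx n (by rw [mul_comm] at h; linarith)
  rw [show (fun n : ℤ => ‖fourierCoeff (⇑f) n‖^2)
      = (fun n : ℤ => Real.sin x^4 / (x - π*n)^4) from funext hterm] at hHasSum
  have hre : HasSum ((fun k : ℤ => Real.sin x ^ 4 / (x + (k:ℝ) * π) ^ 4) ∘ (Equiv.neg ℤ))
      ((2 + Real.cos (2*x))/3) := by
    have hfun : ∀ n : ℤ, ((fun k : ℤ => Real.sin x ^ 4 / (x + (k:ℝ) * π) ^ 4) ∘ (Equiv.neg ℤ)) n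
        = Real.sin x^4 / (x - π*n)^4 := by
      intro n
      simp only [Function.comp_apply, Equiv.neg_apply, Int.cast_neg]
      ring_nf
    rw [funext hfun]
    exact hHasSum
  exact (Equiv.neg ℤ).hasSum_iff.mp hre
end

section
/- For every real x with x ∉ 2πℤ, the family ( sin⁴(x) / (x + 2kπ)⁴ )_{k∈ℤ} is summable and ∑_{k∈ℤ} sin⁴(x)/(x+2kπ)⁴ = cos⁴(x/2) · (2 + cos(x))/3. -/
open Complex MeasureTheory Set AddCircle
open scoped ENNReal

lemma integral_exp_mul_aux (a : ℝ) (ha : a ≠ 0) (w : ℂ) (hw : Complex.exp (a * Complex.I) = w) :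
    ∫ t in (0:ℝ)..1, Complex.exp (a * t * Complex.I) * ((1 - w) * t + w)
      = -(w - 1) ^ 2 / (a : ℂ) ^ 2 := by
  have haC : (a : ℂ) ≠ 0 := Complex.ofReal_ne_zero.mpr ha
  set b : ℂ := ((a : ℂ))⁻¹ with hbdef
  have hb : (a : ℂ) * b = 1 := mul_inv_cancel₀ haC
  set F : ℝ → ℂ := fun t =>
    Complex.exp (a * t * Complex.I) *
      ((1 - w) * ((-Complex.I * b) * t + b ^ 2) + (-Complex.I * b) * w) with hF
  have hderiv : ∀ t ∈ Set.uIcc (0:ℝ) 1,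
      HasDerivAt F (Complex.exp (a * t * Complex.I) * ((1 - w) * t + w)) t := by
    intro t _
    have h1 : HasDerivAt (fun t : ℝ => (t : ℂ)) 1 t := by
      simpa using (hasDerivAt_id t).ofReal_comp
    have h2 : HasDerivAt (fun t : ℝ => (a : ℂ) * t * Complex.I) ((a : ℂ) * Complex.I) t := by
      simpa using (h1.const_mul (a : ℂ)).mul_const Complex.I
    have h3 : HasDerivAt (fun t : ℝ => Complex.exp ((a : ℂ) * t * Complex.I))
        (Complex.exp ((a : ℂ) * t * Complex.I) * ((a : ℂ) * Complex.I)) t := h2.cexp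
    have h4 : HasDerivAt
        (fun t : ℝ => (1 - w) * ((-Complex.I * b) * (t : ℂ) + b ^ 2) + (-Complex.I * b) * w)
        ((1 - w) * (-Complex.I * b)) t := by
      have := (((h1.const_mul (-Complex.I * b)).add_const (b ^ 2)).const_mul
        (1 - w)).add_const ((-Complex.I * b) * w)
      simpa using this
    have h5 := h3.mul h4
    convert h5 using 1
    · rfl
    · rfl
    set e := Complex.exp ((a : ℂ) * t * Complex.I)
    linear_combination (e * ((1 - w) * (t : ℂ) + w)) * Complex.I_sq +
      (Complex.I ^ 2 * (e * ((1 - w) * (t : ℂ) + w)) - e * (1 - w) * Complex.I * b) * hb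
  have hint : IntervalIntegrable (fun t : ℝ => Complex.exp (a * t * Complex.I) * ((1 - w) * t + w))
      MeasureTheory.volume 0 1 := by
    apply Continuous.intervalIntegrable
    fun_prop
  rw [intervalIntegral.integral_eq_sub_of_hasDerivAt hderiv hint]
  have h10 : Complex.exp (a * ((1:ℝ):ℂ) * Complex.I) = w := by
    rw [← hw]; norm_num
  have h11 : -(w - 1) ^ 2 / (a : ℂ) ^ 2 = -(w - 1) ^ 2 * b ^ 2 := by
    rw [div_eq_mul_inv, hbdef, inv_pow]
  simp only [hF]
  rw [h10, h11]
  norm_num [Complex.exp_zero]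
  ring

lemma integral_poly_aux (c s : ℝ) :
    ∫ t in (0:ℝ)..1, ((t + c * (1 - t)) ^ 2 + (s * (1 - t)) ^ 2)
      = (1 + c + (c ^ 2 + s ^ 2)) / 3 := by
  have hderiv : ∀ t ∈ Set.uIcc (0:ℝ) 1,
      HasDerivAt (fun u : ℝ => (c ^ 2 + s ^ 2) * u + (c - c ^ 2 - s ^ 2) * u ^ 2
          + ((1 - c) ^ 2 + s ^ 2) * (u ^ 3 / 3))
        ((t + c * (1 - t)) ^ 2 + (s * (1 - t)) ^ 2) t := by
    intro t _
    have h1 : HasDerivAt (fun u : ℝ => u ^ 2) (2 * t) t := by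
      simpa using hasDerivAt_pow 2 t
    have h2 : HasDerivAt (fun u : ℝ => u ^ 3 / 3) (t ^ 2) t := by
      simpa using (hasDerivAt_pow 3 t).div_const 3
    have := (((hasDerivAt_id t).const_mul (c ^ 2 + s ^ 2)).add
      (h1.const_mul (c - c ^ 2 - s ^ 2))).add (h2.const_mul ((1 - c) ^ 2 + s ^ 2))
    convert this using 1
    · rfl
    · rfl
    · rfl
    ring
  have hint : IntervalIntegrable (fun t : ℝ => (t + c * (1 - t)) ^ 2 + (s * (1 - t)) ^ 2)
      MeasureTheory.volume 0 1 := by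
    apply Continuous.intervalIntegrable
    fun_prop
  rw [intervalIntegral.integral_eq_sub_of_hasDerivAt hderiv hint]
  norm_num
  ring

set_option maxHeartbeats 1000000 in
/-- equation (71): for `x ∉ 2πℤ`,
`∑_{k∈ℤ} sin⁴(x)/(x+2kπ)⁴ = cos⁴(x/2)·(2 + cos(x))/3`. -/
theorem sum_sin_pow_four_div_shifted_two_pi (x : ℝ)
    (hx : ∀ k : ℤ, x ≠ 2 * (k : ℝ) * Real.pi) :
    HasSum (fun k : ℤ => Real.sin x ^ 4 / (x + 2 * (k : ℝ) * Real.pi) ^ 4)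
      (Real.cos (x / 2) ^ 4 * ((2 + Real.cos x) / 3)) := by
  haveI : Fact (0 < (1:ℝ)) := ⟨one_pos⟩
  set w : ℂ := Complex.exp (x * Complex.I) with hwdef
  set G : ℝ → ℂ := fun t => Complex.exp (x * t * Complex.I) * ((1 - w) * t + w) with hGdef
  have hGcont : Continuous G := by fun_prop
  have hG01 : G 0 = G 1 := by
    simp only [hGdef, hwdef]
    push_cast
    norm_num [Complex.exp_zero]
  set f : C(AddCircle (1:ℝ), ℂ) :=
    ⟨AddCircle.liftIco 1 0 G, AddCircle.liftIco_zero_continuous hG01 hGcont.continuousOn⟩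
    with hfdef
  -- the Fourier coefficients of f
  have hcoeff : ∀ n : ℤ,
      fourierCoeff (⇑f) n = -(w - 1) ^ 2 / ((x - 2 * Real.pi * n : ℝ) : ℂ) ^ 2 := by
    intro n
    have han : (x - 2 * Real.pi * n) ≠ 0 := by
      refine sub_ne_zero_of_ne fun h => hx n ?_
      rw [h]; ring
    have hwn : Complex.exp ((x - 2 * Real.pi * n : ℝ) * Complex.I) = w := by
      push_cast
      rw [sub_mul, Complex.exp_sub, hwdef]
      rw [show (2 * (Real.pi : ℂ) * n) * Complex.I = (n : ℂ) * (2 * Real.pi * Complex.I) by ring]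
      rw [Complex.exp_int_mul_two_pi_mul_I]
      simp
    have h2 : ∀ t : ℝ, (@fourier 1 (-n) (t : AddCircle (1:ℝ))) • G t
        = Complex.exp (((x - 2 * Real.pi * n : ℝ) : ℂ) * t * Complex.I) * ((1 - w) * t + w) := by
      intro t
      rw [fourier_coe_apply]
      simp only [smul_eq_mul, hGdef, ← mul_assoc, ← Complex.exp_add]
      congr 2
      push_cast
      field_simp
      ring
    have h3 : Set.EqOn (fun t : ℝ => (@fourier 1 (-n) (t : AddCircle (1:ℝ))) • f t)
        (fun t : ℝ =>
          Complex.exp (((x - 2 * Real.pi * n : ℝ) : ℂ) * t * Complex.I) * ((1 - w) * t + w))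
        (Set.Ioo 0 1) := by
      intro t ht
      simp only [hfdef, ContinuousMap.coe_mk]
      rw [AddCircle.liftIco_zero_coe_apply (Set.Ioo_subset_Ico_self ht)]
      exact h2 t
    rw [fourierCoeff_eq_intervalIntegral (⇑f) n 0]
    simp only [zero_add, one_div_one, one_smul]
    rw [intervalIntegral.integral_of_le zero_le_one, MeasureTheory.integral_Ioc_eq_integral_Ioo]
    rw [MeasureTheory.setIntegral_congr_fun measurableSet_Ioo h3]
    rw [← MeasureTheory.integral_Ioc_eq_integral_Ioo, ← intervalIntegral.integral_of_le zero_le_one]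
    exact integral_exp_mul_aux _ han w hwn
  -- rectangular form of w
  have hwre : w = ((Real.cos x : ℝ) : ℂ) + ((Real.sin x : ℝ) : ℂ) * Complex.I := by
    rw [hwdef, Complex.exp_mul_I, Complex.ofReal_cos, Complex.ofReal_sin]
  have hnormw : ‖w - 1‖ ^ 2 = 2 - 2 * Real.cos x := by
    have hw1 : w - 1 = ((Real.cos x - 1 : ℝ) : ℂ) + ((Real.sin x : ℝ) : ℂ) * Complex.I := by
      rw [hwre]; push_cast; ring
    rw [hw1, Complex.sq_norm, Complex.normSq_add_mul_I]
    nlinarith [Real.sin_sq_add_cos_sq x]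
  set S : ℤ → ℝ := fun n => (2 - 2 * Real.cos x) ^ 2 / (x - 2 * Real.pi * n) ^ 4 with hSdef
  have hnorm : ∀ n : ℤ, ‖fourierCoeff (⇑f) n‖ ^ 2 = S n := by
    intro n
    rw [hcoeff n]
    simp only [hSdef]
    rw [norm_div, norm_neg, norm_pow, norm_pow, Complex.norm_real, Real.norm_eq_abs]
    rw [div_pow, ← pow_mul, ← pow_mul]
    norm_num
    congr 1
    · rw [show (4:ℕ) = 2*2 from rfl, pow_mul, hnormw]
    · have hnn : (0:ℝ) ≤ (x - 2 * Real.pi * (n:ℝ)) ^ 4 := by positivity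
      exact (pow_abs _ 4).trans (_root_.abs_of_nonneg hnn)
  set fL := ContinuousMap.toLp (E := ℂ) 2 haarAddCircle ℂ f with hfL
  have hrepr : ∀ n : ℤ, ‖fourierBasis.repr fL n‖ ^ 2 = S n := by
    intro n
    rw [fourierBasis_repr, hfL, fourierCoeff_toLp, hnorm n]
  have hsummable : Summable S := by
    have hmem : Memℓp (fun n : ℤ => fourierBasis.repr fL n) 2 := (fourierBasis.repr fL).property
    have h2 := hmem.summable (by norm_num : (0:ℝ) < (2:ℝ≥0∞).toReal)
    apply h2.congr
    intro n
    rw [show ((2:ℝ≥0∞).toReal) = ((2:ℕ):ℝ) by norm_num, Real.rpow_natCast, hrepr n]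
  -- the L² norm of f
  have hEqOn : Set.EqOn (fun t : ℝ => ‖f t‖ ^ 2)
      (fun t : ℝ => (t + Real.cos x * (1 - t)) ^ 2 + (Real.sin x * (1 - t)) ^ 2)
      (Set.Ioo 0 1) := by
    intro t ht
    simp only [hfdef, ContinuousMap.coe_mk]
    rw [AddCircle.liftIco_zero_coe_apply (Set.Ioo_subset_Ico_self ht)]
    have hGt : G t = Complex.exp (((x * t : ℝ) : ℂ) * Complex.I) *
        (((t + Real.cos x * (1 - t) : ℝ) : ℂ) + ((Real.sin x * (1 - t) : ℝ) : ℂ) * Complex.I) := by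
      simp only [hGdef]
      rw [hwre]
      push_cast
      ring
    rw [hGt, norm_mul, Complex.norm_exp_ofReal_mul_I,
      one_mul, Complex.sq_norm, Complex.normSq_add_mul_I]
  have hhaar : (haarAddCircle : Measure (AddCircle (1:ℝ))) = volume := by
    have := AddCircle.volume_eq_smul_haarAddCircle (T := 1)
    simpa using this.symm
  have hval : (∫ t : AddCircle 1, ‖f t‖ ^ 2 ∂haarAddCircle) = (2 + Real.cos x) / 3 := by
    rw [hhaar, ← AddCircle.integral_preimage (1:ℝ) 0 (fun t => ‖f t‖ ^ 2)]
    rw [zero_add, MeasureTheory.integral_Ioc_eq_integral_Ioo]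
    rw [MeasureTheory.setIntegral_congr_fun measurableSet_Ioo hEqOn]
    rw [← MeasureTheory.integral_Ioc_eq_integral_Ioo,
      ← intervalIntegral.integral_of_le zero_le_one]
    rw [integral_poly_aux]
    linear_combination (1/3) * Real.sin_sq_add_cos_sq x
  have hPar : ∑' n : ℤ, S n = (2 + Real.cos x) / 3 := by
    have hP := tsum_sq_fourierCoeff fL
    rw [hfL] at hP
    simp only [fourierCoeff_toLp] at hP
    have hae := ContinuousMap.coeFn_toLp (p := 2) (μ := haarAddCircle) (𝕜 := ℂ) f
    have hint2 : (∫ t : AddCircle 1,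
          ‖(ContinuousMap.toLp (E := ℂ) 2 haarAddCircle ℂ f : AddCircle 1 →ₘ[haarAddCircle] ℂ) t‖ ^ 2
          ∂haarAddCircle) = ∫ t : AddCircle 1, ‖f t‖ ^ 2 ∂haarAddCircle := by
      refine integral_congr_ae ?_
      filter_upwards [hae] with t ht
      rw [ht]
    rw [hint2] at hP
    have hcongr : ∑' n : ℤ, S n = ∑' i : ℤ, ‖fourierCoeff (⇑f) i‖ ^ 2 :=
      tsum_congr fun n => (hnorm n).symm
    rw [hcongr, hP]
    exact hval
  have hS : HasSum S ((2 + Real.cos x) / 3) := hsummable.hasSum_iff.mpr hPar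
  have hS2 : HasSum (fun k : ℤ => S (-k)) ((2 + Real.cos x) / 3) :=
    ((Equiv.neg ℤ).hasSum_iff).mpr hS
  have hS3 := hS2.mul_left (Real.cos (x / 2) ^ 4)
  have hsin2 : Real.sin x = 2 * Real.sin (x / 2) * Real.cos (x / 2) := by
    have := Real.sin_two_mul (x / 2)
    rw [show 2 * (x / 2) = x by ring] at this
    exact this
  have hcos2 : Real.cos x = 2 * Real.cos (x / 2) ^ 2 - 1 := by
    have := Real.cos_two_mul (x / 2)
    rw [show 2 * (x / 2) = x by ring] at this
    exact this
  have hnum : Real.cos (x / 2) ^ 4 * (2 - 2 * Real.cos x) ^ 2 = Real.sin x ^ 4 := by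
    rw [hsin2, hcos2]
    linear_combination (-16 * Real.cos (x / 2) ^ 4 * (1 - Real.cos (x / 2) ^ 2
      + Real.sin (x / 2) ^ 2)) * Real.sin_sq_add_cos_sq (x / 2)
  have hfun : (fun k : ℤ => Real.sin x ^ 4 / (x + 2 * (k : ℝ) * Real.pi) ^ 4)
      = fun k : ℤ => Real.cos (x / 2) ^ 4 * S (-k) := by
    funext k
    simp only [hSdef]
    rw [← hnum]
    push_cast
    ring
  rw [hfun]
  exact hS3
end

section
/- Define P(w) = cos²(w/4) and E(w) = (2 + cos(w/2))/3 for w ∈ ℝ. Then for every w ∈ ℝ: (i) P(w+2π) E(w+2π) + P(w) E(w) = (2 + cos²(w/2))/3; and (ii) e^{-iw/2} · E(w+2π) · P(w+2π) / ( P(w+2π) E(w+2π) + P(w) E(w) ) = e^{-iw/2} · sin²(w/4) · (1 + 2sin²(w/4)) / (2 + cos²(w/2)). -/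
/-- equations (60)–(61) for the order-2 spline: with `P(w) = cos²(w/4)` and
`E(w) = (2 + cos(w/2))/3`, one has (i) `P(w+2π)E(w+2π) + P(w)E(w) = (2 + cos²(w/2))/3` and
(ii) `e^{-iw/2}·E(w+2π)·P(w+2π)/(P(w+2π)E(w+2π) + P(w)E(w))
  = e^{-iw/2}·sin²(w/4)·(1 + 2sin²(w/4))/(2 + cos²(w/2))`. -/
theorem spline_order_two_symbol_computation (P E : ℝ → ℝ)
    (hP : ∀ w : ℝ, P w = Real.cos (w / 4) ^ 2)
    (hE : ∀ w : ℝ, E w = (2 + Real.cos (w / 2)) / 3) :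
    ∀ w : ℝ,
      P (w + 2 * Real.pi) * E (w + 2 * Real.pi) + P w * E w =
        (2 + Real.cos (w / 2) ^ 2) / 3 ∧
      Complex.exp (-Complex.I * (w : ℂ) / 2) * (E (w + 2 * Real.pi) : ℂ) *
          (P (w + 2 * Real.pi) : ℂ) /
          ((P (w + 2 * Real.pi) * E (w + 2 * Real.pi) + P w * E w : ℝ) : ℂ) =
        Complex.exp (-Complex.I * (w : ℂ) / 2) * ((Real.sin (w / 4) ^ 2 : ℝ) : ℂ) *
          ((1 + 2 * Real.sin (w / 4) ^ 2 : ℝ) : ℂ) /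
          ((2 + Real.cos (w / 2) ^ 2 : ℝ) : ℂ) := by
  intro w
  have hc4 : Real.cos ((w + 2 * Real.pi) / 4) = - Real.sin (w / 4) := by
    have : (w + 2 * Real.pi) / 4 = w / 4 + Real.pi / 2 := by ring
    rw [this, Real.cos_add_pi_div_two]
  have hc2 : Real.cos ((w + 2 * Real.pi) / 2) = - Real.cos (w / 2) := by
    have : (w + 2 * Real.pi) / 2 = w / 2 + Real.pi := by ring
    rw [this, Real.cos_add_pi]
  have hw2 : Real.cos (w / 2) = Real.cos (w / 4) ^ 2 - Real.sin (w / 4) ^ 2 := by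
    have : w / 2 = 2 * (w / 4) := by ring
    rw [this, Real.cos_two_mul']
  have hsc : Real.sin (w / 4) ^ 2 + Real.cos (w / 4) ^ 2 = 1 := Real.sin_sq_add_cos_sq _
  have h1 : P (w + 2 * Real.pi) * E (w + 2 * Real.pi) + P w * E w =
      (2 + Real.cos (w / 2) ^ 2) / 3 := by
    rw [hP, hP, hE, hE, hc4, hc2, hw2]
    nlinarith [hsc]
  refine ⟨h1, ?_⟩
  have h2 : E (w + 2 * Real.pi) * P (w + 2 * Real.pi) =
      Real.sin (w / 4) ^ 2 * (1 + 2 * Real.sin (w / 4) ^ 2) / 3 := by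
    rw [hP, hE, hc4, hc2, hw2]
    nlinarith [hsc]
  have hpos : (0:ℝ) < 2 + Real.cos (w / 2) ^ 2 := by positivity
  have hne : ((2 + Real.cos (w / 2) ^ 2 : ℝ) : ℂ) ≠ 0 := by
    exact_mod_cast hpos.ne'
  rw [h1]
  have : ((E (w + 2 * Real.pi) : ℝ) : ℂ) * ((P (w + 2 * Real.pi) : ℝ) : ℂ) =
      ((Real.sin (w / 4) ^ 2 * (1 + 2 * Real.sin (w / 4) ^ 2) / 3 : ℝ) : ℂ) := by
    exact_mod_cast congrArg (fun x : ℝ => (x : ℂ)) h2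
  rw [mul_assoc, this]
  push_cast
  field_simp
end

section
/- Let φ : ℝ → ℂ and φ̂ : ℝ → ℂ be functions and (q_n)_{n∈ℤ} complex numbers with ∑_{n∈ℤ} |q_n| < ∞. Assume that for every w ∈ ℝ the families (φ(k) e^{-iwk})_{k∈ℤ} and (φ̂(w+2kπ))_{k∈ℤ} are summable with ∑_{k∈ℤ} φ(k) e^{-iwk} = ∑_{k∈ℤ} φ̂(w+2kπ). Define Q(w) = (1/2) ∑_{n∈ℤ} q_n e^{-iwn/2} and ψ(k/2) = ∑_{n∈ℤ} q_n φ(k−n) for k ∈ ℤ. Then for every w ∈ ℝ the family (ψ(k/2) e^{-iwk/2})_{k∈ℤ} is summable and (1/2) ∑_{k∈ℤ} ψ(k/2) e^{-iwk/2} = Q(w) · ∑_{k∈ℤ} φ̂(w/2 + 2kπ). -/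
/-- equations (D11)–(D13), Proposition 3(b): if `(q_n)` is absolutely summable,
and for every `w` the Poisson identity `∑_k φ(k) e^{-iwk} = ∑_k φ̂(w+2kπ)` holds (both families
being summable), then with `Q(w) = (1/2) ∑_n q_n e^{-iwn/2}` and
`ψ(k/2) = ∑_n q_n φ(k−n)`, the family `(ψ(k/2) e^{-iwk/2})_k` is summable and
`(1/2) ∑_k ψ(k/2) e^{-iwk/2} = Q(w) · ∑_k φ̂(w/2 + 2kπ)`. -/
theorem wavelet_half_integer_poisson (φ φhat : ℝ → ℂ) (q : ℤ → ℂ)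
    (hq : Summable fun n : ℤ => ‖q n‖)
    (hφsum : ∀ w : ℝ,
      Summable (fun k : ℤ => φ (k : ℝ) * Complex.exp (-Complex.I * (w : ℂ) * (k : ℂ))))
    (hφhatsum : ∀ w : ℝ, Summable (fun k : ℤ => φhat (w + 2 * (k : ℝ) * Real.pi)))
    (hpoisson : ∀ w : ℝ,
      ∑' k : ℤ, φ (k : ℝ) * Complex.exp (-Complex.I * (w : ℂ) * (k : ℂ)) =
        ∑' k : ℤ, φhat (w + 2 * (k : ℝ) * Real.pi))
    (Q : ℝ → ℂ)
    (hQ : ∀ w : ℝ,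
      Q w = (1 / 2 : ℂ) * ∑' n : ℤ, q n * Complex.exp (-Complex.I * (w : ℂ) * (n : ℂ) / 2))
    (ψhalf : ℤ → ℂ)
    (hψ : ∀ k : ℤ, ψhalf k = ∑' n : ℤ, q n * φ ((k : ℝ) - (n : ℝ))) :
    ∀ w : ℝ,
      Summable (fun k : ℤ => ψhalf k * Complex.exp (-Complex.I * (w : ℂ) * (k : ℂ) / 2)) ∧
      (1 / 2 : ℂ) * ∑' k : ℤ, ψhalf k * Complex.exp (-Complex.I * (w : ℂ) * (k : ℂ) / 2) =
        Q w * ∑' k : ℤ, φhat (w / 2 + 2 * (k : ℝ) * Real.pi) := by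
  intro w
  set e : ℤ → ℂ := fun k => Complex.exp (-Complex.I * (w : ℂ) * (k : ℂ) / 2) with he
  have hnorme : ∀ k : ℤ, ‖e k‖ = 1 := by
    intro k; simp [he, Complex.norm_exp]
  have hemul : ∀ m n : ℤ, e (m + n) = e m * e n := by
    intro m n
    simp only [he, ← Complex.exp_add]
    congr 1
    push_cast
    ring
  -- summability of ‖φ k‖
  have hφn : Summable fun k : ℤ => ‖φ (k : ℝ)‖ := by
    have h0 := hφsum 0
    simp only [Complex.ofReal_zero, mul_zero, zero_mul, Complex.exp_zero, mul_one] at h0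
    exact (summable_norm_iff.mpr h0)
  -- the double family
  set F : ℤ × ℤ → ℂ := fun p => q p.2 * φ ((p.1 : ℝ) - (p.2 : ℝ)) * e p.1 with hFdef
  have hg : Summable fun p : ℤ × ℤ => ‖q p.1‖ * ‖φ ((p.2 : ℝ))‖ :=
    hq.mul_of_nonneg hφn (fun n => norm_nonneg _) (fun n => norm_nonneg _)
  let σ : ℤ × ℤ ≃ ℤ × ℤ :=
    { toFun := fun p => (p.2, p.1 - p.2)
      invFun := fun p => (p.1 + p.2, p.1)
      left_inv := by intro p; simp
      right_inv := by intro p; simp }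
  have hgσ : Summable fun p : ℤ × ℤ => ‖q p.2‖ * ‖φ ((p.1 : ℝ) - (p.2 : ℝ))‖ := by
    have := hg.comp_injective σ.injective
    convert this using 2 with p
    · rfl
    simp only [Function.comp_apply, σ, Equiv.coe_fn_mk]
    push_cast
    ring_nf
  have hF : Summable F := by
    apply Summable.of_norm_bounded hgσ
    intro p
    simp only [hFdef, norm_mul, hnorme p.1, mul_one]
    exact le_rfl
  have hFswap : Summable (F ∘ Prod.swap) := hF.comp_injective Prod.swap_injective
  have hinner : ∀ k : ℤ, Summable fun n : ℤ => F (k, n) := fun k => hF.prod_factor k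
  have hinner' : ∀ n : ℤ, Summable fun k : ℤ => F (k, n) := fun n => hFswap.prod_factor n
  have hψe : (fun k : ℤ => ψhalf k * e k) = fun k : ℤ => ∑' n : ℤ, F (k, n) := by
    funext k
    rw [hψ k, ← tsum_mul_right]
  -- marginal sum
  have hmar : HasSum (fun k : ℤ => ∑' n : ℤ, F (k, n)) (∑' p : ℤ × ℤ, F p) :=
    hF.hasSum.prod_fiberwise (fun k => (hinner k).hasSum)
  constructor
  · rw [show (fun k : ℤ => ψhalf k * Complex.exp (-Complex.I * (w : ℂ) * (k : ℂ) / 2))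
        = fun k : ℤ => ψhalf k * e k from rfl, hψe]
    exact hmar.summable
  -- the φ-side sum at w/2
  have hS : (∑' m : ℤ, φ (m : ℝ) * e m) = ∑' k : ℤ, φhat (w / 2 + 2 * (k : ℝ) * Real.pi) := by
    rw [← hpoisson (w / 2)]
    congr 1
    funext k
    congr 1
    simp only [he]
    congr 1
    push_cast
    ring
  have hφe : Summable fun m : ℤ => φ (m : ℝ) * e m := by
    have := hφsum (w / 2)
    convert this using 2 with m
    simp only [he]
    congr 1
    push_cast
    ring
  -- inner sums over k for fixed n
  have hcol : ∀ n : ℤ, (∑' k : ℤ, F (k, n)) = q n * e n * ∑' m : ℤ, φ (m : ℝ) * e m := by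
    intro n
    rw [← (Equiv.addRight n).tsum_eq (fun k => F (k, n))]
    have hbody : ∀ m : ℤ, F ((Equiv.addRight n) m, n) = q n * e n * (φ (m : ℝ) * e m) := by
      intro m
      have hcast : ((m + n : ℤ) : ℝ) - (n : ℝ) = (m : ℝ) := by push_cast; ring
      simp only [Equiv.coe_addRight, hFdef, hemul m n, hcast]
      ring
    rw [tsum_congr hbody, tsum_mul_left]
  have hswap : ∑' k : ℤ, (∑' n : ℤ, F (k, n)) = ∑' n : ℤ, ∑' k : ℤ, F (k, n) :=
    (Summable.tsum_comm' (f := fun k n => F (k, n)) hF hinner hinner').symm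
  have h1 : ∑' k : ℤ, ψhalf k * Complex.exp (-Complex.I * (w : ℂ) * (k : ℂ) / 2)
      = (∑' n : ℤ, q n * e n) * ∑' k : ℤ, φhat (w / 2 + 2 * (k : ℝ) * Real.pi) := by
    have hrfl : (fun k : ℤ => ψhalf k * Complex.exp (-Complex.I * (w : ℂ) * (k : ℂ) / 2))
        = fun k : ℤ => ψhalf k * e k := rfl
    rw [hrfl, hψe, hswap, tsum_congr hcol, ← hS, tsum_mul_right]
  have he2 : (∑' n : ℤ, q n * Complex.exp (-Complex.I * (w : ℂ) * (n : ℂ) / 2))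
      = ∑' n : ℤ, q n * e n := rfl
  rw [h1, hQ w, he2]
  ring
end
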